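/- For every i with 0 ≤ i ≤ m+n−1, the sorted elements of 𝔉(m,n) satisfy k_i + k_{m+n−1−i} = mn. -/

import Mathlib

/-- Let `m, n` be coprime with `2 ≤ m < n`, and let
`k 0 < k 1 < ⋯ < k (m+n-1)` be the increasing enumeration of the set
`𝔉(m,n) = (mℤ ∪ nℤ) ∩ [0, mn]`.  Then `k i + k (m+n-1-i) = m*n` for all `i`. -/
theorem sorted_elements_add_rev (m n : ℕ) (hm : 2 ≤ m) (hmn : m < n)
    (hcop : Nat.Coprime m n) (k : ℕ → ℕ)
    (hmono : ∀ i j : ℕ, i < j → j < m + n → k i < k j)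
    (hmem : ∀ x : ℕ, ((m ∣ x ∨ n ∣ x) ∧ x ≤ m * n) ↔ ∃ i < m + n, k i = x) :
    ∀ i < m + n, k i + k (m + n - 1 - i) = m * n := by
  set N := m + n with hN
  have hm0 : 0 < m := by omega
  have hn0 : 0 < n := by omega
  set F : Finset ℕ := (Finset.range (m * n + 1)).filter (fun x => m ∣ x ∨ n ∣ x) with hF
  have hFmem : ∀ x, x ∈ F ↔ ((m ∣ x ∨ n ∣ x) ∧ x ≤ m * n) := by
    intro x
    simp [hF, Finset.mem_filter, Finset.mem_range, Nat.lt_succ_iff, and_comm]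
  -- card F = N
  set A : Finset ℕ := (Finset.range (n + 1)).image (· * m) with hA
  set B : Finset ℕ := (Finset.range (m + 1)).image (· * n) with hB
  have hFAB : F = A ∪ B := by
    ext x
    simp only [hFmem, Finset.mem_union, hA, hB, Finset.mem_image, Finset.mem_range,
      Nat.lt_succ_iff]
    constructor
    · rintro ⟨h1 | h1, h2⟩
      · obtain ⟨c, rfl⟩ := h1
        exact Or.inl ⟨c, by nlinarith, by ring⟩
      · obtain ⟨c, rfl⟩ := h1
        exact Or.inr ⟨c, by nlinarith, by ring⟩
    · rintro (⟨c, hc, rfl⟩ | ⟨c, hc, rfl⟩)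
      · exact ⟨Or.inl ⟨c, by ring⟩, by nlinarith⟩
      · exact ⟨Or.inr ⟨c, by ring⟩, by nlinarith⟩
  have hcardA : A.card = n + 1 := by
    rw [hA, Finset.card_image_of_injective _ (fun a b h => by
      exact Nat.eq_of_mul_eq_mul_right hm0 h), Finset.card_range]
  have hcardB : B.card = m + 1 := by
    rw [hB, Finset.card_image_of_injective _ (fun a b h => by
      exact Nat.eq_of_mul_eq_mul_right hn0 h), Finset.card_range]
  have hinter : A ∩ B = {0, m * n} := by
    ext x
    simp only [Finset.mem_inter, hA, hB, Finset.mem_image, Finset.mem_range,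
      Nat.lt_succ_iff, Finset.mem_insert, Finset.mem_singleton]
    constructor
    · rintro ⟨⟨c, hc, rfl⟩, ⟨d, hd, hdc⟩⟩
      have hmd : m ∣ c * m := ⟨c, by ring⟩
      have hnd : n ∣ c * m := ⟨d, by linarith⟩
      have : m * n ∣ c * m := Nat.Coprime.mul_dvd_of_dvd_of_dvd hcop hmd hnd
      have hle : c * m ≤ m * n := by nlinarith
      obtain ⟨t, ht⟩ := this
      rcases Nat.eq_zero_or_pos t with rfl | htpos
      · left; omega
      · right
        have : m * n ≤ m * n * t := Nat.le_mul_of_pos_right _ htpos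
        omega
    · rintro (rfl | rfl)
      · exact ⟨⟨0, by omega, by ring⟩, ⟨0, by omega, by ring⟩⟩
      · exact ⟨⟨n, le_refl _, by ring⟩, ⟨m, le_refl _, by ring⟩⟩
  have hcardF : F.card = N := by
    have hunion := Finset.card_union_add_card_inter A B
    have hmn0 : 0 < m * n := by positivity
    have h0 : (0 : ℕ) ∉ ({m * n} : Finset ℕ) := by
      simp only [Finset.mem_singleton]; omega
    have h2 : (A ∩ B).card = 2 := by
      rw [hinter, Finset.card_insert_of_notMem h0, Finset.card_singleton]
    rw [hFAB]
    omega
  -- F equals the image of k on range N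
  have hsub : F ⊆ (Finset.range N).image k := by
    intro x hx
    rw [hFmem] at hx
    obtain ⟨i, hi, rfl⟩ := (hmem x).1 hx
    exact Finset.mem_image.2 ⟨i, Finset.mem_range.2 hi, rfl⟩
  have hFeq : F = (Finset.range N).image k := by
    apply Finset.eq_of_subset_of_card_le hsub
    calc ((Finset.range N).image k).card ≤ N := by
          simpa using Finset.card_image_le (s := Finset.range N) (f := k)
      _ = F.card := hcardF.symm
  have hkF : ∀ i < N, k i ∈ F := by
    intro i hi
    rw [hFeq]
    exact Finset.mem_image.2 ⟨i, Finset.mem_range.2 hi, rfl⟩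
  have hkle : ∀ i < N, k i ≤ m * n := fun i hi => ((hFmem _).1 (hkF i hi)).2
  -- the reflected enumeration
  have hNpos : 0 < N := by omega
  set g : Fin N → ℕ := fun i => m * n - k (N - 1 - (i : ℕ)) with hg
  have hgF : ∀ i : Fin N, g i ∈ F := by
    intro i
    have hlt : N - 1 - (i : ℕ) < N := by omega
    have hmem' := (hFmem _).1 (hkF _ hlt)
    have hgi : g i = m * n - k (N - 1 - (i : ℕ)) := rfl
    rw [hFmem, hgi]
    refine ⟨?_, by omega⟩
    rcases hmem'.1 with h | h
    · exact Or.inl ((Nat.dvd_sub (Dvd.intro n rfl) h))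
    · exact Or.inr ((Nat.dvd_sub (Dvd.intro_left m rfl) h))
  have hgmono : StrictMono g := by
    intro i j hij
    have hj : (j : ℕ) < N := j.2
    have hij' : (i : ℕ) < (j : ℕ) := hij
    have h1 : N - 1 - (j : ℕ) < N - 1 - (i : ℕ) := by omega
    have h2 : N - 1 - (i : ℕ) < N := by omega
    have h3 := hmono _ _ h1 h2
    have h4 := hkle _ h2
    simp only [hg]
    omega
  set f : Fin N → ℕ := fun i => k (i : ℕ) with hf
  have hfF : ∀ i : Fin N, f i ∈ F := fun i => hkF _ i.2
  have hfmono : StrictMono f := by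
    intro i j hij
    exact hmono _ _ hij j.2
  have huf := Finset.orderEmbOfFin_unique hcardF hfF hfmono
  have hug := Finset.orderEmbOfFin_unique hcardF hgF hgmono
  intro i hi
  have : f ⟨i, hi⟩ = g ⟨i, hi⟩ := by rw [huf, hug]
  simp only [hf, hg] at this
  have h2 : N - 1 - i < N := by omega
  have := hkle _ h2
  omega
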